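/- Let H be a group with a normal subgroup X such that H/X is cyclic of order a, generated by the coset Xf. Let K be an algebraically closed field and let M be a finite-dimensional irreducible KX-module, with representation ρ : X → GL(M), such that for every h ∈ H the h-conjugate module M^h is isomorphic to M as a KX-module. Then ρ extends to a representation ρ : H → GL(M). -/

import Mathlib

set_option maxHeartbeats 1000000 in
/-- If `H/X` is cyclic of order `a` generated by the coset `Xf`, `K` is algebraically
closed, `M` a finite-dimensional irreducible `KX`-module all of whose `H`-conjugates
are isomorphic to `M`, then the representation of `X` on `M` extends to `H`. -/
theorem extend_irreducible_rep_of_cyclic_quotient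
    (K : Type*) [Field K] [IsAlgClosed K]
    (H : Type*) [Group H] (X : Subgroup H) [X.Normal]
    (a : ℕ) (ha : 0 < a) (f : H)
    (hgen : ∀ q : H ⧸ X, q ∈ Subgroup.zpowers (QuotientGroup.mk f : H ⧸ X))
    (horder : Nat.card (H ⧸ X) = a)
    (M : Type*) [AddCommGroup M] [Module K M] [FiniteDimensional K M]
    (ρ : X →* (M →ₗ[K] M)ˣ)
    (hirr : ∀ p : Submodule K M,
      (∀ (x : X), ∀ v ∈ p, (ρ x : M →ₗ[K] M) v ∈ p) → p = ⊥ ∨ p = ⊤)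
    (hconj : ∀ h : H, ∃ g : M ≃ₗ[K] M, ∀ (x : X) (hx : h * (x : H) * h⁻¹ ∈ X) (v : M),
      (ρ ⟨h * (x : H) * h⁻¹, hx⟩ : M →ₗ[K] M) (g v) = g ((ρ x : M →ₗ[K] M) v)) :
    ∃ ρ' : H →* (M →ₗ[K] M)ˣ, ∀ x : X, ρ' (x : H) = ρ x := by
  rcases subsingleton_or_nontrivial M with hM | hM
  · exact ⟨1, fun x => Units.ext (Subsingleton.elim _ _)⟩
  have hρc : ∀ (v w : H) (hv : v ∈ X) (hw : w ∈ X), v = w → ρ ⟨v, hv⟩ = ρ ⟨w, hw⟩ := by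
    rintro v w hv hw rfl; rfl
  have hmem1 : ∀ x : X, f * (x : H) * f⁻¹ ∈ X := fun x =>
    Subgroup.Normal.conj_mem inferInstance x.1 x.2 f
  have hinv1 : ∀ x : X, f⁻¹ * (x : H) * f⁻¹⁻¹ ∈ X := fun x =>
    Subgroup.Normal.conj_mem inferInstance x.1 x.2 f⁻¹
  have hmem : ∀ (kk : ℤ) (x : X), f ^ kk * (x : H) * (f ^ kk)⁻¹ ∈ X := fun kk x =>
    Subgroup.Normal.conj_mem inferInstance x.1 x.2 (f ^ kk)
  -- key conjugation lemma for any unit intertwining conjugation by `f`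
  have key : ∀ W : (M →ₗ[K] M)ˣ,
      (∀ x : X, W * ρ x = ρ ⟨f * (x : H) * f⁻¹, hmem1 x⟩ * W) →
      ∀ (kk : ℤ) (x : X) (hx : f ^ kk * (x : H) * (f ^ kk)⁻¹ ∈ X),
        W ^ kk * ρ x = ρ ⟨f ^ kk * (x : H) * (f ^ kk)⁻¹, hx⟩ * W ^ kk := by
    intro W hW
    have hW' : ∀ (x : X) (hx : f⁻¹ * (x : H) * f⁻¹⁻¹ ∈ X),
        W⁻¹ * ρ x = ρ ⟨f⁻¹ * (x : H) * f⁻¹⁻¹, hx⟩ * W⁻¹ := by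
      intro x hx
      have e := hW ⟨f⁻¹ * (x : H) * f⁻¹⁻¹, hx⟩
      have e2 : ρ ⟨f * ((⟨f⁻¹ * (x : H) * f⁻¹⁻¹, hx⟩ : X) : H) * f⁻¹, hmem1 _⟩ = ρ x :=
        hρc _ _ _ x.2 (by show f * (f⁻¹ * (x : H) * f⁻¹⁻¹) * f⁻¹ = (x : H); group)
      rw [e2] at e
      calc W⁻¹ * ρ x = W⁻¹ * (ρ x * W) * W⁻¹ := by group
        _ = W⁻¹ * (W * ρ ⟨f⁻¹ * (x : H) * f⁻¹⁻¹, hx⟩) * W⁻¹ := by rw [e]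
        _ = ρ ⟨f⁻¹ * (x : H) * f⁻¹⁻¹, hx⟩ * W⁻¹ := by group
    intro kk
    induction kk using Int.induction_on with
    | zero =>
      intro x hx
      rw [zpow_zero, one_mul, mul_one]
      exact (hρc _ _ hx x.2 (by group)).symm
    | succ n ih =>
      intro x hx
      have e1 : W ^ ((n : ℤ) + 1) = W ^ (n : ℤ) * W := zpow_add_one W n
      calc W ^ ((n : ℤ) + 1) * ρ x = W ^ (n : ℤ) * (W * ρ x) := by rw [e1, mul_assoc]
        _ = W ^ (n : ℤ) * (ρ ⟨f * (x : H) * f⁻¹, hmem1 x⟩ * W) := by rw [hW x]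
        _ = W ^ (n : ℤ) * ρ ⟨f * (x : H) * f⁻¹, hmem1 x⟩ * W := (mul_assoc _ _ _).symm
        _ = ρ ⟨f ^ (n : ℤ) * (f * (x : H) * f⁻¹) * (f ^ (n : ℤ))⁻¹,
              hmem (n : ℤ) ⟨f * (x : H) * f⁻¹, hmem1 x⟩⟩ * W ^ (n : ℤ) * W := by
            rw [ih ⟨f * (x : H) * f⁻¹, hmem1 x⟩ (hmem (n : ℤ) ⟨f * (x : H) * f⁻¹, hmem1 x⟩)]
        _ = ρ ⟨f ^ ((n : ℤ) + 1) * (x : H) * (f ^ ((n : ℤ) + 1))⁻¹, hx⟩ * W ^ ((n : ℤ) + 1) := by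
            rw [hρc _ _ (hmem (n : ℤ) ⟨f * (x : H) * f⁻¹, hmem1 x⟩) hx (by group), mul_assoc, ← e1]
    | pred n ih =>
      intro x hx
      have e1 : W ^ (-(n : ℤ) - 1) = W ^ (-(n : ℤ)) * W⁻¹ := zpow_sub_one W (-n)
      calc W ^ (-(n : ℤ) - 1) * ρ x = W ^ (-(n : ℤ)) * (W⁻¹ * ρ x) := by rw [e1, mul_assoc]
        _ = W ^ (-(n : ℤ)) * (ρ ⟨f⁻¹ * (x : H) * f⁻¹⁻¹, hinv1 x⟩ * W⁻¹) := by
            rw [hW' x (hinv1 x)]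
        _ = W ^ (-(n : ℤ)) * ρ ⟨f⁻¹ * (x : H) * f⁻¹⁻¹, hinv1 x⟩ * W⁻¹ := (mul_assoc _ _ _).symm
        _ = ρ ⟨f ^ (-(n : ℤ)) * (f⁻¹ * (x : H) * f⁻¹⁻¹) * (f ^ (-(n : ℤ)))⁻¹,
              hmem (-(n : ℤ)) ⟨f⁻¹ * (x : H) * f⁻¹⁻¹, hinv1 x⟩⟩ *
              W ^ (-(n : ℤ)) * W⁻¹ := by
            rw [ih ⟨f⁻¹ * (x : H) * f⁻¹⁻¹, hinv1 x⟩ (hmem (-(n : ℤ)) ⟨f⁻¹ * (x : H) * f⁻¹⁻¹, hinv1 x⟩)]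
        _ = ρ ⟨f ^ (-(n : ℤ) - 1) * (x : H) * (f ^ (-(n : ℤ) - 1))⁻¹, hx⟩ *
              W ^ (-(n : ℤ) - 1) := by
            rw [hρc _ _ (hmem (-(n : ℤ)) ⟨f⁻¹ * (x : H) * f⁻¹⁻¹, hinv1 x⟩) hx (by group), mul_assoc, ← e1]
  -- order of the coset of `f`
  have htop : Subgroup.zpowers (QuotientGroup.mk f : H ⧸ X) = ⊤ := by
    rw [Subgroup.eq_top_iff']; exact hgen
  have hordf : orderOf (QuotientGroup.mk f : H ⧸ X) = a := by
    rw [← Nat.card_zpowers, htop, ← horder]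
    exact Nat.card_congr Subgroup.topEquiv.toEquiv
  have hdvd : ∀ m : ℤ, f ^ m ∈ X → (a : ℤ) ∣ m := by
    intro m hm
    rw [← hordf]
    rw [orderOf_dvd_iff_zpow_eq_one, ← QuotientGroup.mk_zpow, QuotientGroup.eq_one_iff]
    exact hm
  have hfa : f ^ (a : ℤ) ∈ X := by
    rw [← QuotientGroup.eq_one_iff, QuotientGroup.mk_zpow, zpow_natCast, ← hordf]
    exact pow_orderOf_eq_one _
  set fa : X := ⟨f ^ (a : ℤ), hfa⟩ with hfadef
  -- the intertwiner for `f`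
  obtain ⟨g, hg⟩ := hconj f
  set G₀ : (M →ₗ[K] M)ˣ :=
    ⟨g.toLinearMap, g.symm.toLinearMap,
      by ext v; simp [Module.End.mul_apply],
      by ext v; simp [Module.End.mul_apply]⟩ with hG₀def
  have hG₀ : ∀ x : X, G₀ * ρ x = ρ ⟨f * (x : H) * f⁻¹, hmem1 x⟩ * G₀ := by
    intro x
    refine Units.ext (LinearMap.ext fun v => ?_)
    have := hg x (hmem1 x) v
    simp only [Units.val_mul, Module.End.mul_apply, hG₀def]
    simpa using this.symm
  have keyG₀ := key G₀ hG₀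
  set u : (M →ₗ[K] M)ˣ := (ρ fa)⁻¹ * G₀ ^ (a : ℤ) with hudef
  have hcommu : ∀ x : X, u * ρ x = ρ x * u := by
    intro x
    have h1 := keyG₀ (a : ℤ) x (hmem _ x)
    have h2 : ρ ⟨f ^ (a : ℤ) * (x : H) * (f ^ (a : ℤ))⁻¹, hmem _ x⟩ =
        ρ fa * ρ x * (ρ fa)⁻¹ := by
      rw [← map_inv, ← map_mul, ← map_mul]
      exact hρc _ _ _ _ rfl
    have h3 : u * ρ x = (ρ fa)⁻¹ * (G₀ ^ (a : ℤ) * ρ x) := by rw [hudef, mul_assoc]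
    rw [h3, h1, h2, hudef]
    group
  -- Schur: `u` is a nonzero scalar
  obtain ⟨μ₀, hev⟩ := Module.End.exists_eigenvalue (↑u : M →ₗ[K] M)
  have hEinv : ∀ (x : X), ∀ v ∈ Module.End.eigenspace (↑u : M →ₗ[K] M) μ₀,
      (ρ x : M →ₗ[K] M) v ∈ Module.End.eigenspace (↑u : M →ₗ[K] M) μ₀ := by
    intro x v hv
    rw [Module.End.mem_eigenspace_iff] at hv ⊢
    have hc : (↑u : M →ₗ[K] M) * (ρ x : M →ₗ[K] M) =
        (ρ x : M →ₗ[K] M) * (↑u : M →ₗ[K] M) := by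
      have := congrArg Units.val (hcommu x)
      simpa [Units.val_mul] using this
    have h3 := LinearMap.congr_fun hc v
    simp only [Module.End.mul_apply] at h3
    rw [h3, hv, map_smul]
  have hT : ∀ v : M, (↑u : M →ₗ[K] M) v = μ₀ • v := by
    rcases hirr _ hEinv with hbot | htop'
    · exact absurd hbot hev
    · intro v
      have : v ∈ Module.End.eigenspace (↑u : M →ₗ[K] M) μ₀ := by rw [htop']; trivial
      exact Module.End.mem_eigenspace_iff.mp this
  have hμ₀ : μ₀ ≠ 0 := by
    intro h0
    obtain ⟨v0, hv0⟩ := exists_ne (0 : M)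
    have h4 := hT ((↑u⁻¹ : M →ₗ[K] M) v0)
    rw [h0, zero_smul] at h4
    apply hv0
    have h5 := LinearMap.congr_fun (Units.mul_inv u) v0
    simp only [Module.End.mul_apply, Module.End.one_apply, Units.val_mul] at h5
    exact h5.symm.trans h4
  obtain ⟨μ, hμ⟩ := IsAlgClosed.exists_pow_nat_eq μ₀ ha
  have hμne : μ ≠ 0 := by
    rintro rfl
    exact hμ₀ (by rw [← hμ, zero_pow ha.ne'])
  set s : (M →ₗ[K] M)ˣ :=
    ⟨μ • 1, μ⁻¹ • 1,
      by ext v; simp [Module.End.mul_apply, smul_smul, mul_inv_cancel₀ hμne, inv_mul_cancel₀ hμne],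
      by ext v; simp [Module.End.mul_apply, smul_smul, mul_inv_cancel₀ hμne, inv_mul_cancel₀ hμne]⟩ with hsdef
  have hscomm : ∀ r : (M →ₗ[K] M)ˣ, s * r = r * s := by
    intro r
    refine Units.ext (LinearMap.ext fun v => ?_)
    simp [hsdef, Units.val_mul, Module.End.mul_apply, map_smul]
  have hsu : s ^ (a : ℤ) = u := by
    apply Units.ext
    rw [zpow_natCast, Units.val_pow_eq_pow_val]
    have huval : (↑u : M →ₗ[K] M) = μ₀ • 1 := LinearMap.ext fun v => by
      rw [hT v]; simp
    rw [huval, hsdef]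
    show (μ • (1 : M →ₗ[K] M)) ^ a = μ₀ • 1
    rw [smul_pow, one_pow, hμ]
  set W : (M →ₗ[K] M)ˣ := s⁻¹ * G₀ with hWdef
  have hWa : W ^ (a : ℤ) = ρ fa := by
    have h5 : W ^ (a : ℤ) = s⁻¹ ^ (a : ℤ) * G₀ ^ (a : ℤ) :=
      Commute.mul_zpow (Commute.inv_left (hscomm G₀)) _
    have h6 : G₀ ^ (a : ℤ) = ρ fa * u := by rw [hudef]; group
    rw [h5, inv_zpow, hsu, h6, ← hcommu fa]
    group
  have hWc1 : ∀ x : X, W * ρ x = ρ ⟨f * (x : H) * f⁻¹, hmem1 x⟩ * W := by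
    intro x
    have h7 : s⁻¹ * ρ ⟨f * (x : H) * f⁻¹, hmem1 x⟩ =
        ρ ⟨f * (x : H) * f⁻¹, hmem1 x⟩ * s⁻¹ :=
      Commute.inv_left (hscomm _)
    calc W * ρ x = s⁻¹ * (G₀ * ρ x) := by rw [hWdef, mul_assoc]
      _ = s⁻¹ * (ρ ⟨f * (x : H) * f⁻¹, hmem1 x⟩ * G₀) := by rw [hG₀ x]
      _ = ρ ⟨f * (x : H) * f⁻¹, hmem1 x⟩ * W := by
          rw [← mul_assoc, h7, mul_assoc, hWdef]
  have keyW := key W hWc1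
  -- powers of `W` agree with `ρ` on powers of `f` lying in `X`
  have hC : ∀ (m : ℤ) (hm : f ^ m ∈ X), W ^ m = ρ ⟨f ^ m, hm⟩ := by
    intro m hm
    obtain ⟨t, rfl⟩ := hdvd m hm
    rw [zpow_mul, hWa, ← map_zpow]
    have he : fa ^ t = (⟨f ^ ((a : ℤ) * t), hm⟩ : X) := by
      apply Subtype.ext
      rw [SubgroupClass.coe_zpow]
      exact (zpow_mul f _ _).symm
    rw [he]
  -- the section
  have hk0 : ∀ h : H, ∃ m : ℤ, (QuotientGroup.mk f : H ⧸ X) ^ m = QuotientGroup.mk h :=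
    fun h => Subgroup.mem_zpowers_iff.mp (hgen _)
  choose k hk using hk0
  have hxmem : ∀ h : H, (f ^ k h)⁻¹ * h ∈ X := by
    intro h
    exact QuotientGroup.eq.mp (by rw [QuotientGroup.mk_zpow]; exact hk h)
  set F : H → (M →ₗ[K] M)ˣ :=
    fun h => W ^ k h * ρ ⟨(f ^ k h)⁻¹ * h, hxmem h⟩ with hF
  have hB : ∀ (h : H) (m : ℤ) (hm : (f ^ m)⁻¹ * h ∈ X),
      F h = W ^ m * ρ ⟨(f ^ m)⁻¹ * h, hm⟩ := by
    intro h m hm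
    have hd : f ^ (k h - m) ∈ X := by
      have e : f ^ (k h - m) = ((f ^ m)⁻¹ * h) * ((f ^ k h)⁻¹ * h)⁻¹ := by group
      rw [e]; exact mul_mem hm (inv_mem (hxmem h))
    have hsplit : W ^ k h = W ^ m * W ^ (k h - m) := by
      rw [← zpow_add]; congr 1; ring
    calc F h = W ^ k h * ρ ⟨(f ^ k h)⁻¹ * h, hxmem h⟩ := by rw [hF]
      _ = W ^ m * (W ^ (k h - m) * ρ ⟨(f ^ k h)⁻¹ * h, hxmem h⟩) := by
          rw [hsplit, mul_assoc]
      _ = W ^ m * (ρ ⟨f ^ (k h - m), hd⟩ * ρ ⟨(f ^ k h)⁻¹ * h, hxmem h⟩) := by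
          rw [hC _ hd]
      _ = W ^ m * ρ ⟨(f ^ m)⁻¹ * h, hm⟩ := by
          rw [← map_mul]
          refine congrArg (W ^ m * ·) (congrArg ρ (Subtype.ext ?_)).symm
          show (f ^ m)⁻¹ * h = f ^ (k h - m) * ((f ^ k h)⁻¹ * h)
          group
  have hmulF : ∀ h₁ h₂ : H, F (h₁ * h₂) = F h₁ * F h₂ := by
    intro h₁ h₂
    have hy : f ^ (-(k h₂)) * (((f ^ k h₁)⁻¹ * h₁)) * (f ^ (-(k h₂)))⁻¹ ∈ X :=
      hmem _ ⟨(f ^ k h₁)⁻¹ * h₁, hxmem h₁⟩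
    have hm12 : (f ^ (k h₁ + k h₂))⁻¹ * (h₁ * h₂) ∈ X := by
      have e : (f ^ (k h₁ + k h₂))⁻¹ * (h₁ * h₂) =
          (f ^ (-(k h₂)) * ((f ^ k h₁)⁻¹ * h₁) * (f ^ (-(k h₂)))⁻¹) *
            ((f ^ k h₂)⁻¹ * h₂) := by group
      rw [e]; exact mul_mem hy (hxmem h₂)
    have h8 := keyW (-(k h₂)) ⟨(f ^ k h₁)⁻¹ * h₁, hxmem h₁⟩ hy
    have h9 : ρ ⟨(f ^ k h₁)⁻¹ * h₁, hxmem h₁⟩ * W ^ k h₂ =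
        W ^ k h₂ * ρ ⟨f ^ (-(k h₂)) * ((f ^ k h₁)⁻¹ * h₁) * (f ^ (-(k h₂)))⁻¹, hy⟩ := by
      calc ρ ⟨(f ^ k h₁)⁻¹ * h₁, hxmem h₁⟩ * W ^ k h₂
          = W ^ k h₂ * ((W ^ (-(k h₂)) * ρ ⟨(f ^ k h₁)⁻¹ * h₁, hxmem h₁⟩) * W ^ k h₂) := by
            group
        _ = W ^ k h₂ *
              ((ρ ⟨f ^ (-(k h₂)) * ((f ^ k h₁)⁻¹ * h₁) * (f ^ (-(k h₂)))⁻¹, hy⟩ *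
                W ^ (-(k h₂))) * W ^ k h₂) := by rw [h8]
        _ = W ^ k h₂ *
              ρ ⟨f ^ (-(k h₂)) * ((f ^ k h₁)⁻¹ * h₁) * (f ^ (-(k h₂)))⁻¹, hy⟩ := by group
    rw [hB (h₁ * h₂) (k h₁ + k h₂) hm12]
    calc W ^ (k h₁ + k h₂) * ρ ⟨(f ^ (k h₁ + k h₂))⁻¹ * (h₁ * h₂), hm12⟩
        = W ^ k h₁ * W ^ k h₂ *
            (ρ ⟨f ^ (-(k h₂)) * ((f ^ k h₁)⁻¹ * h₁) * (f ^ (-(k h₂)))⁻¹, hy⟩ *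
              ρ ⟨(f ^ k h₂)⁻¹ * h₂, hxmem h₂⟩) := by
          rw [← map_mul, ← zpow_add]
          exact congrArg (W ^ (k h₁ + k h₂) * ·) (congrArg ρ (Subtype.ext
            (show (f ^ (k h₁ + k h₂))⁻¹ * (h₁ * h₂) =
              (f ^ (-(k h₂)) * ((f ^ k h₁)⁻¹ * h₁) * (f ^ (-(k h₂)))⁻¹) *
                ((f ^ k h₂)⁻¹ * h₂) by group)))
      _ = W ^ k h₁ *
            (W ^ k h₂ * ρ ⟨f ^ (-(k h₂)) * ((f ^ k h₁)⁻¹ * h₁) * (f ^ (-(k h₂)))⁻¹, hy⟩) *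
            ρ ⟨(f ^ k h₂)⁻¹ * h₂, hxmem h₂⟩ := by group
      _ = W ^ k h₁ * (ρ ⟨(f ^ k h₁)⁻¹ * h₁, hxmem h₁⟩ * W ^ k h₂) *
            ρ ⟨(f ^ k h₂)⁻¹ * h₂, hxmem h₂⟩ := by rw [h9]
      _ = F h₁ * F h₂ := by rw [hF]; group
  refine ⟨MonoidHom.mk' F hmulF, ?_⟩
  intro x
  show F (x : H) = ρ x
  have h10 : (f ^ (0 : ℤ))⁻¹ * (x : H) ∈ X := by simp only [zpow_zero, inv_one, one_mul]; exact x.2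
  rw [hB (x : H) 0 h10, zpow_zero, one_mul]
  exact hρc _ _ h10 x.2 (by group)
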